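/- Let P be the random walk matrix of a connected weighted bipartite graph with parts X and Y, self-adjoint with respect to the stationary distribution μ. If g: X ∪ Y → ℝ satisfies ⟨g, 1_X⟩_μ = ⟨g, 1_Y⟩_μ = 0, then ⟨g, Pg⟩_μ ≤ λ₂(P) · 2·sqrt(⟨g_X, g_X⟩_μ · ⟨g_Y, g_Y⟩_μ), where g_X (resp. g_Y) agrees with g on X (resp. Y) and is 0 elsewhere. -/
import Mathlib

/-- If `g` vanishes on one part of a bipartite graph, the quadratic form vanishes. -/
lemma aux_zero_stmt4 {α : Type*} [Fintype α] (P : Matrix α α ℝ) (μ : α → ℝ) (part : α → Bool)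
    (hbip : ∀ x y, P x y ≠ 0 → part x ≠ part y)
    (g : α → ℝ) (c : Bool) (h0 : ∀ x, part x = c → g x = 0) :
    (∑ x, μ x * g x * P.mulVec g x) = 0 := by
  apply Finset.sum_eq_zero
  intro x _
  by_cases hx : part x = c
  · rw [h0 x hx]; ring
  · have hPg : P.mulVec g x = 0 := by
      simp only [Matrix.mulVec, dotProduct]
      apply Finset.sum_eq_zero
      intro y _
      show P x y * g y = 0
      by_cases hy : part y = c
      · rw [h0 y hy, mul_zero]
      · have hxy : part x = part y := by
          revert hx hy; cases c <;> cases hpx : part x <;> cases hpy : part y <;> simp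
        have : P x y = 0 := by
          by_contra hP
          exact hbip x y hP hxy
        rw [this, zero_mul]
    rw [hPg, mul_zero]

/-- Bipartite refined eigenvalue bound: if `P` is the random walk matrix of a
connected weighted bipartite graph with parts given by `part`, self-adjoint with
respect to the stationary distribution `μ`, `l2` is (an upper bound on) the second
eigenvalue of `P` in the variational sense, and `g` is orthogonal to the indicators
of both parts, then `⟨g, Pg⟩_μ ≤ l2 · 2√(⟨g_X,g_X⟩_μ ⟨g_Y,g_Y⟩_μ)`. -/
theorem stmt4 {α : Type*} [Fintype α] (P : Matrix α α ℝ) (μ : α → ℝ) (part : α → Bool)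
    (hμ : ∀ x, 0 < μ x)
    (hPnn : ∀ x y, 0 ≤ P x y)
    (hstoch : ∀ x, ∑ y, P x y = 1)
    (hbip : ∀ x y, P x y ≠ 0 → part x ≠ part y)
    (hconn : ∀ x y : α, ∃ (k : ℕ) (q : Fin (k + 1) → α), q 0 = x ∧ q (Fin.last k) = y ∧
      ∀ i : Fin k, 0 < P (q i.castSucc) (q i.succ))
    (hsa : ∀ x y, μ x * P x y = μ y * P y x)
    (l2 : ℝ)
    (hl2 : ∀ f : α → ℝ, (∑ x, μ x * f x) = 0 →
      (∑ x, μ x * f x * P.mulVec f x) ≤ l2 * ∑ x, μ x * f x * f x)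
    (g : α → ℝ)
    (hgX : (∑ x, μ x * g x * (if part x then 1 else 0)) = 0)
    (hgY : (∑ x, μ x * g x * (if part x then 0 else 1)) = 0) :
    (∑ x, μ x * g x * P.mulVec g x) ≤
      l2 * (2 * Real.sqrt ((∑ x, if part x then μ x * g x ^ 2 else 0) *
        (∑ x, if part x then 0 else μ x * g x ^ 2))) := by
  classical
  set a := ∑ x, if part x then μ x * g x ^ 2 else 0 with ha_def
  set b := ∑ x, if part x then 0 else μ x * g x ^ 2 with hb_def
  have hann : 0 ≤ a := Finset.sum_nonneg fun x _ => by
    by_cases h : part x <;> simp [h] <;> exact mul_nonneg (hμ x).le (sq_nonneg _)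
  have hbnn : 0 ≤ b := Finset.sum_nonneg fun x _ => by
    by_cases h : part x <;> simp [h] <;> exact mul_nonneg (hμ x).le (sq_nonneg _)
  -- degenerate cases
  by_cases haz : a = 0
  · have h0 : ∀ x, part x = true → g x = 0 := by
      intro x hx
      have := (Finset.sum_eq_zero_iff_of_nonneg (fun y _ => by
        by_cases h : part y <;> simp [h] <;> exact mul_nonneg (hμ y).le (sq_nonneg _))).mp haz.symm.symm x (Finset.mem_univ x)
      rw [if_pos hx] at this
      have h2 : g x ^ 2 = 0 := by
        rcases mul_eq_zero.mp this with h | h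
        · exact absurd h (hμ x).ne'
        · exact h
      exact pow_eq_zero_iff (two_ne_zero) |>.mp h2
    rw [aux_zero_stmt4 P μ part hbip g true h0, haz, zero_mul, Real.sqrt_zero]
    simp
  by_cases hbz : b = 0
  · have h0 : ∀ x, part x = false → g x = 0 := by
      intro x hx
      have := (Finset.sum_eq_zero_iff_of_nonneg (fun y _ => by
        by_cases h : part y <;> simp [h] <;> exact mul_nonneg (hμ y).le (sq_nonneg _))).mp hbz.symm.symm x (Finset.mem_univ x)
      rw [if_neg (by simp [hx])] at this
      have h2 : g x ^ 2 = 0 := by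
        rcases mul_eq_zero.mp this with h | h
        · exact absurd h (hμ x).ne'
        · exact h
      exact pow_eq_zero_iff (two_ne_zero) |>.mp h2
    rw [aux_zero_stmt4 P μ part hbip g false h0, hbz, mul_zero, Real.sqrt_zero]
    simp
  have ha0 : 0 < a := lt_of_le_of_ne hann (Ne.symm haz)
  have hb0 : 0 < b := lt_of_le_of_ne hbnn (Ne.symm hbz)
  have hra : (0:ℝ) < Real.sqrt a := Real.sqrt_pos.mpr ha0
  have hrb : (0:ℝ) < Real.sqrt b := Real.sqrt_pos.mpr hb0
  set u := Real.sqrt (Real.sqrt b) / Real.sqrt (Real.sqrt a) with hu_def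
  set v := Real.sqrt (Real.sqrt a) / Real.sqrt (Real.sqrt b) with hv_def
  have hrra : (0:ℝ) < Real.sqrt (Real.sqrt a) := Real.sqrt_pos.mpr hra
  have hrrb : (0:ℝ) < Real.sqrt (Real.sqrt b) := Real.sqrt_pos.mpr hrb
  have hu0 : 0 < u := div_pos hrrb hrra
  have hv0 : 0 < v := div_pos hrra hrrb
  have huv : u * v = 1 := by
    rw [hu_def, hv_def]
    field_simp
  have hu2 : u ^ 2 * a = Real.sqrt a * Real.sqrt b := by
    have h1 : Real.sqrt (Real.sqrt a) ^ 2 = Real.sqrt a := Real.sq_sqrt hra.le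
    have h2 : Real.sqrt (Real.sqrt b) ^ 2 = Real.sqrt b := Real.sq_sqrt hrb.le
    have h3 : Real.sqrt a * Real.sqrt a = a := Real.mul_self_sqrt ha0.le
    rw [hu_def, div_pow, h1, h2]
    field_simp
    nlinarith [h3]
  have hv2 : v ^ 2 * b = Real.sqrt a * Real.sqrt b := by
    have h1 : Real.sqrt (Real.sqrt a) ^ 2 = Real.sqrt a := Real.sq_sqrt hra.le
    have h2 : Real.sqrt (Real.sqrt b) ^ 2 = Real.sqrt b := Real.sq_sqrt hrb.le
    have h3 : Real.sqrt b * Real.sqrt b = b := Real.mul_self_sqrt hb0.le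
    rw [hv_def, div_pow, h1, h2]
    field_simp
    nlinarith [h3]
  set f : α → ℝ := fun x => if part x then u * g x else v * g x with hf_def
  have hf0 : (∑ x, μ x * f x) = 0 := by
    have heq : ∀ x ∈ Finset.univ, μ x * f x =
        u * (μ x * g x * (if part x then 1 else 0)) +
        v * (μ x * g x * (if part x then 0 else 1)) := by
      intro x _
      by_cases h : part x <;> simp [hf_def, h] <;> ring
    rw [Finset.sum_congr rfl heq, Finset.sum_add_distrib, ← Finset.mul_sum, ← Finset.mul_sum,
      hgX, hgY]
    ring
  have key := hl2 f hf0
  have hLHS : (∑ x, μ x * f x * P.mulVec f x) = ∑ x, μ x * g x * P.mulVec g x := by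
    apply Finset.sum_congr rfl
    intro x _
    by_cases hx : part x
    · have hPf : P.mulVec f x = v * P.mulVec g x := by
        simp only [Matrix.mulVec, dotProduct]
        rw [Finset.mul_sum]
        apply Finset.sum_congr rfl
        intro y _
        show P x y * f y = v * (P x y * g y)
        by_cases hy : part y
        · have hP : P x y = 0 := by
            by_contra hP
            exact hbip x y hP (by rw [hx, hy])
          simp [hP]
        · simp only [hf_def, if_neg hy]
          ring
      rw [hPf]
      simp only [hf_def, if_pos hx]
      have : μ x * (u * g x) * (v * P.mulVec g x) =
          (u * v) * (μ x * g x * P.mulVec g x) := by ring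
      rw [this, huv, one_mul]
    · have hPf : P.mulVec f x = u * P.mulVec g x := by
        simp only [Matrix.mulVec, dotProduct]
        rw [Finset.mul_sum]
        apply Finset.sum_congr rfl
        intro y _
        show P x y * f y = u * (P x y * g y)
        by_cases hy : part y
        · simp only [hf_def, if_pos hy]
          ring
        · have hP : P x y = 0 := by
            by_contra hP
            apply hbip x y hP
            simp only [Bool.not_eq_true] at hx hy
            rw [hx, hy]
          simp [hP]
      rw [hPf]
      simp only [hf_def, if_neg hx]
      have : μ x * (v * g x) * (u * P.mulVec g x) =
          (u * v) * (μ x * g x * P.mulVec g x) := by ring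
      rw [this, huv, one_mul]
  have hRHS : (∑ x, μ x * f x * f x) = u ^ 2 * a + v ^ 2 * b := by
    rw [ha_def, hb_def, Finset.mul_sum, Finset.mul_sum, ← Finset.sum_add_distrib]
    apply Finset.sum_congr rfl
    intro x _
    by_cases h : part x <;> simp [hf_def, h] <;> ring
  rw [hLHS, hRHS, hu2, hv2] at key
  have hsqrt : Real.sqrt (a * b) = Real.sqrt a * Real.sqrt b := Real.sqrt_mul ha0.le b
  calc (∑ x, μ x * g x * P.mulVec g x)
      ≤ l2 * (Real.sqrt a * Real.sqrt b + Real.sqrt a * Real.sqrt b) := key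
    _ = l2 * (2 * Real.sqrt (a * b)) := by rw [hsqrt]; ring
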